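/- arXiv:1611.09317 — 3 statements merged into one kernel-verified Lean document; each statement's English description precedes it below -/
import Mathlib

section
/- Let z ∈ ℝ^d and X = Σ_i z_i ε_i where ε_i are i.i.d. Rademacher (±1 with probability 1/2 each). Then E[|X|] ≥ ‖z‖₂ / √2. -/
open MeasureTheory ProbabilityTheory Finset

section DiscreteKhintchine


variable {n : ℕ}

def csgn (b : Bool) : ℝ := if b then 1 else -1

lemma sum_prod_bool (h : Fin n → Bool → ℝ) :
    ∑ x : Fin n → Bool, ∏ i, h i (x i) = ∏ i, (h i true + h i false) := by
  have : ∀ i : Fin n, (h i true + h i false) = ∑ b : Bool, h i b := by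
    intro i; simp [Fintype.sum_bool]
  simp_rw [this, Finset.prod_univ_sum, Fintype.piFinset_univ]

def wal (A : Finset (Fin n)) (x : Fin n → Bool) : ℝ := ∏ i ∈ A, csgn (x i)

lemma wal_eq_prod_univ (A : Finset (Fin n)) (x : Fin n → Bool) :
    wal A x = ∏ i, (if i ∈ A then csgn (x i) else 1) := by
  rw [wal, ← Finset.prod_filter]
  congr 1
  simp

lemma orth (A B : Finset (Fin n)) :
    ∑ x : Fin n → Bool, wal A x * wal B x
      = if A = B then (2:ℝ)^n else 0 := by
  simp_rw [wal_eq_prod_univ, ← Finset.prod_mul_distrib]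
  rw [sum_prod_bool (fun i b => (if i ∈ A then csgn b else 1) * (if i ∈ B then csgn b else 1))]
  by_cases hAB : A = B
  · subst hAB
    simp only [if_pos rfl]
    have : ∀ i : Fin n, ((if i ∈ A then csgn true else 1) * (if i ∈ A then csgn true else 1) +
        (if i ∈ A then csgn false else 1) * (if i ∈ A then csgn false else 1)) = 2 := by
      intro i; by_cases h : i ∈ A <;> simp [h, csgn] <;> norm_num
    rw [Finset.prod_congr rfl (fun i _ => this i)]
    simp
  · rw [if_neg hAB]
    obtain ⟨i, hi⟩ : ∃ i, (i ∈ A ∧ i ∉ B) ∨ (i ∈ B ∧ i ∉ A) := by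
      by_contra h
      push_neg at h
      apply hAB
      ext j
      have := h j
      tauto
    apply Finset.prod_eq_zero (Finset.mem_univ i)
    rcases hi with ⟨h1, h2⟩ | ⟨h1, h2⟩ <;> simp [h1, h2, csgn] <;> norm_num

lemma complete (x y : Fin n → Bool) :
    ∑ A : Finset (Fin n), wal A x * wal A y = if x = y then (2:ℝ)^n else 0 := by
  have h1 : ∀ A : Finset (Fin n), wal A x * wal A y = ∏ i ∈ A, (csgn (x i) * csgn (y i)) := by
    intro A; rw [wal, wal, Finset.prod_mul_distrib]
  simp_rw [h1]
  have h2 : ∑ A : Finset (Fin n), ∏ i ∈ A, (csgn (x i) * csgn (y i))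
      = ∏ i, (csgn (x i) * csgn (y i) + 1) := by
    rw [Finset.prod_add]
    rw [← Finset.powerset_univ]
    apply Finset.sum_congr rfl
    intro A _
    simp
  rw [h2]
  by_cases hxy : x = y
  · subst hxy
    rw [if_pos rfl]
    have : ∀ i : Fin n, csgn (x i) * csgn (x i) + 1 = 2 := by
      intro i; cases (x i) <;> simp [csgn] <;> norm_num
    rw [Finset.prod_congr rfl (fun i _ => this i)]
    simp
  · rw [if_neg hxy]
    obtain ⟨i, hi⟩ : ∃ i, x i ≠ y i := by
      by_contra h; push_neg at h; exact hxy (funext h)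
    apply Finset.prod_eq_zero (Finset.mem_univ i)
    cases hx : x i <;> cases hy : y i <;> simp_all [csgn]

def wcoef (g : (Fin n → Bool) → ℝ) (A : Finset (Fin n)) : ℝ := ∑ x, g x * wal A x

lemma parseval (g : (Fin n → Bool) → ℝ) :
    ∑ A : Finset (Fin n), (wcoef g A)^2 = 2^n * ∑ x, (g x)^2 := by
  have h : ∀ A : Finset (Fin n), (wcoef g A)^2
      = ∑ x, ∑ y, g x * g y * (wal A x * wal A y) := by
    intro A
    rw [wcoef, sq, Finset.sum_mul_sum]
    apply Finset.sum_congr rfl; intro x _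
    apply Finset.sum_congr rfl; intro y _
    ring
  simp_rw [h]
  rw [Finset.sum_comm]
  have h2 : ∀ x : Fin n → Bool, ∑ A : Finset (Fin n), ∑ y, g x * g y * (wal A x * wal A y)
      = 2^n * (g x)^2 := by
    intro x
    rw [Finset.sum_comm]
    have h3 : ∀ y, ∑ A : Finset (Fin n), g x * g y * (wal A x * wal A y)
        = g x * g y * (if x = y then (2:ℝ)^n else 0) := by
      intro y
      rw [← Finset.mul_sum, complete]
    simp_rw [h3]
    simp only [mul_ite, mul_zero]
    rw [Finset.sum_ite_eq Finset.univ x (fun y => g x * g y * (2:ℝ)^n)]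
    simp [sq]; ring
  simp_rw [h2]
  rw [Finset.mul_sum]

lemma csgn_not (b : Bool) : csgn (!b) = - csgn b := by cases b <;> simp [csgn]

def flip1 (i : Fin n) (x : Fin n → Bool) : Fin n → Bool := Function.update x i (!x i)

lemma flip1_invol (i : Fin n) : Function.Involutive (flip1 i) := by
  intro x
  funext j
  by_cases h : j = i
  · subst h; simp [flip1]
  · simp [flip1, Function.update_of_ne h]

lemma flip1_bij (i : Fin n) : Function.Bijective (flip1 i) := (flip1_invol i).bijective

lemma wal_flip1 (A : Finset (Fin n)) (i : Fin n) (x : Fin n → Bool) :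
    wal A (flip1 i x) = (if i ∈ A then -1 else 1) * wal A x := by
  by_cases h : i ∈ A
  · rw [if_pos h, wal, wal, ← Finset.prod_erase_mul _ _ h, ← Finset.prod_erase_mul _ _ h]
    have h1 : ∀ j ∈ A.erase i, csgn (flip1 i x j) = csgn (x j) := by
      intro j hj
      have : j ≠ i := Finset.ne_of_mem_erase hj
      simp [flip1, Function.update_of_ne this]
    rw [Finset.prod_congr rfl h1]
    have : csgn (flip1 i x i) = - csgn (x i) := by simp [flip1, csgn_not]
    rw [this]; ring
  · rw [if_neg h, one_mul, wal, wal]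
    apply Finset.prod_congr rfl
    intro j hj
    have : j ≠ i := by rintro rfl; exact h hj
    simp [flip1, Function.update_of_ne this]

lemma wcoef_flip1 (g : (Fin n → Bool) → ℝ) (i : Fin n) (A : Finset (Fin n)) :
    wcoef (fun x => g (flip1 i x)) A = (if i ∈ A then -1 else 1) * wcoef g A := by
  rw [wcoef, wcoef, Finset.mul_sum]
  have key : ∑ x : Fin n → Bool, g (flip1 i x) * wal A x
      = ∑ x : Fin n → Bool, g x * wal A (flip1 i x) := by
    rw [← Function.Bijective.sum_comp (flip1_bij i) (fun y => g y * wal A (flip1 i y))]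
    apply Finset.sum_congr rfl
    intro x _
    rw [flip1_invol i x]
  rw [key]
  apply Finset.sum_congr rfl
  intro x _
  rw [wal_flip1]
  ring

def flipAll (x : Fin n → Bool) : Fin n → Bool := fun i => !x i

lemma flipAll_bij : Function.Bijective (flipAll (n := n)) := by
  have : Function.Involutive (flipAll (n := n)) := by
    intro x; funext i; simp [flipAll]
  exact this.bijective

lemma wal_flipAll (A : Finset (Fin n)) (x : Fin n → Bool) :
    wal A (flipAll x) = (-1)^(A.card) * wal A x := by
  rw [wal, wal]
  have : ∀ i ∈ A, csgn (flipAll x i) = -1 * csgn (x i) := by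
    intro i _; simp [flipAll, csgn_not]
  rw [Finset.prod_congr rfl this, Finset.prod_mul_distrib]
  simp

lemma wcoef_even (g : (Fin n → Bool) → ℝ) (hg : ∀ x, g (flipAll x) = g x)
    (A : Finset (Fin n)) (hA : ¬ Even A.card) : wcoef g A = 0 := by
  have h1 : wcoef g A = ∑ x, g (flipAll x) * wal A (flipAll x) := by
    rw [wcoef, ← Function.Bijective.sum_comp flipAll_bij (fun x => g x * wal A x)]
  have h2 : wcoef g A = (-1)^(A.card) * wcoef g A := by
    nth_rewrite 1 [h1]
    rw [wcoef, Finset.mul_sum]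
    apply Finset.sum_congr rfl
    intro x _
    rw [hg, wal_flipAll]
    ring
  have h3 : (-1:ℝ)^(A.card) = -1 := Odd.neg_one_pow (Nat.not_even_iff_odd.mp hA)
  rw [h3] at h2
  linarith

theorem discrete_khintchine (z : Fin n → ℝ) :
    Real.sqrt (∑ i, z i ^ 2) / Real.sqrt 2 * 2^n
      ≤ ∑ x : Fin n → Bool, |∑ i, z i * csgn (x i)| := by
  set f : (Fin n → Bool) → ℝ := fun x => |∑ i, z i * csgn (x i)| with hf
  set σ2 := ∑ i, z i ^ 2 with hσ2
  have hσ2nn : 0 ≤ σ2 := Finset.sum_nonneg (fun i _ => sq_nonneg _)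
  set N : ℝ := 2^n with hN
  have hNpos : (0:ℝ) < N := by positivity
  have hNcard : ((Fintype.card (Fin n → Bool) : ℕ) : ℝ) = N := by
    rw [hN]; norm_num [Fintype.card_fun]
  -- S1 : second moment
  have S1 : ∑ x : Fin n → Bool, (f x)^2 = N * σ2 := by
    have hfx : ∀ x : Fin n → Bool, (f x)^2
        = ∑ i, ∑ j, (z i * z j) * (wal {i} x * wal {j} x) := by
      intro x
      rw [hf, sq_abs, sq, Finset.sum_mul_sum]
      apply Finset.sum_congr rfl; intro i _
      apply Finset.sum_congr rfl; intro j _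
      simp [wal]
      ring
    simp_rw [hfx]
    rw [Finset.sum_comm]
    have hinner : ∀ i : Fin n, ∑ x : Fin n → Bool, ∑ j, (z i * z j) * (wal {i} x * wal {j} x)
        = z i ^ 2 * N := by
      intro i
      rw [Finset.sum_comm]
      have h1 : ∀ j, ∑ x : Fin n → Bool, (z i * z j) * (wal {i} x * wal {j} x)
          = if i = j then z i * z j * N else 0 := by
        intro j
        rw [← Finset.mul_sum, orth]
        by_cases hij : i = j
        · subst hij; simp [hN]
        · have hne : ({i} : Finset (Fin n)) ≠ {j} := by
            simpa [Finset.singleton_inj] using hij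
          rw [if_neg hne, if_neg hij, mul_zero]
      simp_rw [h1]
      rw [Finset.sum_ite_eq Finset.univ i (fun j => z i * z j * N)]
      simp only [Finset.mem_univ, if_true]
      ring
    simp_rw [hinner]
    rw [← Finset.sum_mul]
    ring
  -- evenness
  have S3 : ∀ x, f (flipAll x) = f x := by
    intro x
    have : ∑ i, z i * csgn (flipAll x i) = - ∑ i, z i * csgn (x i) := by
      rw [← Finset.sum_neg_distrib]
      apply Finset.sum_congr rfl
      intro i _
      simp [flipAll, csgn_not]
    rw [hf]
    simp only [this, abs_neg]
  -- derivative bound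
  have S2 : ∀ (i : Fin n) (x : Fin n → Bool), (f x - f (flip1 i x))^2 ≤ 4 * (z i)^2 := by
    intro i x
    have hdiff : ∑ j, z j * csgn (x j) - ∑ j, z j * csgn (flip1 i x j)
        = z i * (csgn (x i) - csgn (!(x i))) := by
      rw [← Finset.sum_sub_distrib]
      rw [Finset.sum_eq_single i]
      · simp [flip1]; ring
      · intro j _ hj
        simp [flip1, Function.update_of_ne hj]
      · simp
    have habs : |f x - f (flip1 i x)| ≤ 2 * |z i| := by
      have h1 := abs_sub_abs_le_abs_sub (∑ j, z j * csgn (x j)) (∑ j, z j * csgn (flip1 i x j))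
      have h2 := abs_sub_abs_le_abs_sub (∑ j, z j * csgn (flip1 i x j)) (∑ j, z j * csgn (x j))
      have h3 : |∑ j, z j * csgn (x j) - ∑ j, z j * csgn (flip1 i x j)| ≤ 2 * |z i| := by
        rw [hdiff, abs_mul]
        have : |csgn (x i) - csgn (!(x i))| = 2 := by cases (x i) <;> norm_num [csgn]
        rw [this]; ring_nf; rw [mul_comm]
      have h3' : |∑ j, z j * csgn (flip1 i x j) - ∑ j, z j * csgn (x j)| ≤ 2 * |z i| := by
        rw [abs_sub_comm]; exact h3
      rw [abs_sub_le_iff]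
      exact ⟨le_trans h1 h3, le_trans h2 h3'⟩
    calc (f x - f (flip1 i x))^2 = |f x - f (flip1 i x)|^2 := (sq_abs _).symm
      _ ≤ (2 * |z i|)^2 := by
          apply pow_le_pow_left₀ (abs_nonneg _) habs
      _ = 4 * (z i)^2 := by rw [mul_pow, sq_abs]; norm_num
  -- B : sum of squared coefficients containing i
  have B : ∀ i : Fin n,
      ∑ A ∈ Finset.univ.filter (fun A : Finset (Fin n) => i ∈ A), (wcoef f A)^2
        ≤ N^2 * (z i)^2 := by
    intro i
    have hw : ∀ A : Finset (Fin n), wcoef (fun x => f x - f (flip1 i x)) A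
        = if i ∈ A then 2 * wcoef f A else 0 := by
      intro A
      have hsub : wcoef (fun x => f x - f (flip1 i x)) A
          = wcoef f A - wcoef (fun x => f (flip1 i x)) A := by
        rw [wcoef, wcoef, wcoef, ← Finset.sum_sub_distrib]
        apply Finset.sum_congr rfl
        intro x _
        ring
      rw [hsub, wcoef_flip1]
      split_ifs <;> ring
    have hpars := parseval (fun x => f x - f (flip1 i x))
    rw [Finset.sum_filter]
    have hLHS : ∑ A : Finset (Fin n), (wcoef (fun x => f x - f (flip1 i x)) A)^2
        = ∑ A : Finset (Fin n), (if i ∈ A then (4:ℝ) * (wcoef f A)^2 else 0) := by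
      apply Finset.sum_congr rfl
      intro A _
      rw [hw]
      split_ifs <;> ring
    have hRHS : (2:ℝ)^n * ∑ x : Fin n → Bool, (f x - f (flip1 i x))^2 ≤ 4 * (N^2 * (z i)^2) := by
      have h1 : ∑ x : Fin n → Bool, (f x - f (flip1 i x))^2 ≤ N * (4 * (z i)^2) := by
        calc ∑ x : Fin n → Bool, (f x - f (flip1 i x))^2
            ≤ ∑ _x : Fin n → Bool, 4 * (z i)^2 := Finset.sum_le_sum (fun x _ => S2 i x)
          _ = N * (4 * (z i)^2) := by
              rw [Finset.sum_const, nsmul_eq_mul, ← hNcard]; simp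
      calc (2:ℝ)^n * ∑ x : Fin n → Bool, (f x - f (flip1 i x))^2
          ≤ N * (N * (4 * (z i)^2)) := by
            rw [← hN]
            apply mul_le_mul_of_nonneg_left h1 (le_of_lt hNpos)
        _ = 4 * (N^2 * (z i)^2) := by ring
    have key : ∑ A : Finset (Fin n), (if i ∈ A then (4:ℝ) * (wcoef f A)^2 else 0)
        ≤ 4 * (N^2 * (z i)^2) := by
      rw [← hLHS, hpars]
      exact hRHS
    have : ∑ A : Finset (Fin n), (if i ∈ A then (wcoef f A)^2 else 0)
        = (∑ A : Finset (Fin n), (if i ∈ A then (4:ℝ) * (wcoef f A)^2 else 0)) / 4 := by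
      rw [Finset.sum_div]
      apply Finset.sum_congr rfl
      intro A _
      split_ifs <;> ring
    rw [this]
    linarith
  -- C : weighted sum
  have C : ∑ A : Finset (Fin n), (A.card : ℝ) * (wcoef f A)^2 ≤ N^2 * σ2 := by
    have h1 : ∀ A : Finset (Fin n), (A.card : ℝ) * (wcoef f A)^2
        = ∑ i : Fin n, (if i ∈ A then (wcoef f A)^2 else 0) := by
      intro A
      rw [Finset.sum_ite_mem, Finset.univ_inter, Finset.sum_const, nsmul_eq_mul]
    simp_rw [h1]
    rw [Finset.sum_comm]
    have h2 : ∀ i : Fin n, ∑ A : Finset (Fin n), (if i ∈ A then (wcoef f A)^2 else 0)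
        ≤ N^2 * (z i)^2 := by
      intro i
      rw [← Finset.sum_filter]
      exact B i
    calc ∑ i : Fin n, ∑ A : Finset (Fin n), (if i ∈ A then (wcoef f A)^2 else 0)
        ≤ ∑ i : Fin n, N^2 * (z i)^2 := Finset.sum_le_sum (fun i _ => h2 i)
      _ = N^2 * σ2 := by rw [hσ2, Finset.mul_sum]
  -- A1 : Parseval for f
  have A1 : ∑ A : Finset (Fin n), (wcoef f A)^2 = N * (N * σ2) := by
    rw [parseval, S1, ← hN]
  -- D : per-term spectral bound
  have D : ∀ A : Finset (Fin n), A ≠ ∅ → 2 * (wcoef f A)^2 ≤ (A.card : ℝ) * (wcoef f A)^2 := by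
    intro A hA
    by_cases hev : Even A.card
    · have hcard : 2 ≤ A.card := by
        rcases hev with ⟨k, hk⟩
        have : A.card ≠ 0 := fun h => hA (Finset.card_eq_zero.mp h)
        omega
      apply mul_le_mul_of_nonneg_right _ (sq_nonneg _)
      exact_mod_cast hcard
    · rw [wcoef_even f S3 A hev]
      simp
  -- combine
  have hmem : (∅ : Finset (Fin n)) ∈ (Finset.univ : Finset (Finset (Fin n))) := Finset.mem_univ _
  have split1 : ∑ A : Finset (Fin n), (wcoef f A)^2
      = (wcoef f ∅)^2 + ∑ A ∈ Finset.univ.erase ∅, (wcoef f A)^2 :=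
    (Finset.add_sum_erase _ _ hmem).symm
  have split2 : ∑ A : Finset (Fin n), (A.card : ℝ) * (wcoef f A)^2
      = ∑ A ∈ Finset.univ.erase ∅, (A.card : ℝ) * (wcoef f A)^2 := by
    rw [← Finset.add_sum_erase _ _ hmem]
    simp
  have spec : ∑ A ∈ Finset.univ.erase ∅, 2 * (wcoef f A)^2
      ≤ ∑ A ∈ Finset.univ.erase ∅, (A.card : ℝ) * (wcoef f A)^2 :=
    Finset.sum_le_sum (fun A hA => D A (Finset.ne_of_mem_erase hA))
  have e1 : ∑ A ∈ Finset.univ.erase ∅, (wcoef f A)^2 = N * (N * σ2) - (wcoef f ∅)^2 := by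
    rw [← A1, split1]; ring
  have e2 : ∑ A ∈ Finset.univ.erase ∅, 2 * (wcoef f A)^2
      = 2 * (N * (N * σ2) - (wcoef f ∅)^2) := by
    rw [← Finset.mul_sum, e1]
  have key : 2 * (N * (N * σ2) - (wcoef f ∅)^2) ≤ N^2 * σ2 := by
    calc 2 * (N * (N * σ2) - (wcoef f ∅)^2)
        = ∑ A ∈ Finset.univ.erase ∅, 2 * (wcoef f A)^2 := e2.symm
      _ ≤ ∑ A ∈ Finset.univ.erase ∅, (A.card : ℝ) * (wcoef f A)^2 := spec
      _ = ∑ A : Finset (Fin n), (A.card : ℝ) * (wcoef f A)^2 := split2.symm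
      _ ≤ N^2 * σ2 := C
  have hF0 : wcoef f ∅ = ∑ x, f x := by
    rw [wcoef]
    apply Finset.sum_congr rfl
    intro x _
    simp [wal]
  have hF0nn : 0 ≤ wcoef f ∅ := by
    rw [hF0]; exact Finset.sum_nonneg (fun x _ => abs_nonneg _)
  have hsq : (Real.sqrt σ2 / Real.sqrt 2 * N)^2 ≤ (wcoef f ∅)^2 := by
    have h2 : (Real.sqrt σ2 / Real.sqrt 2 * N)^2 = σ2 / 2 * N^2 := by
      rw [mul_pow, div_pow, Real.sq_sqrt hσ2nn, Real.sq_sqrt (by norm_num : (0:ℝ) ≤ 2)]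
    rw [h2]
    nlinarith [key]
  have htnn : 0 ≤ Real.sqrt σ2 / Real.sqrt 2 * N := by positivity
  have final : Real.sqrt σ2 / Real.sqrt 2 * N ≤ wcoef f ∅ := by
    nlinarith [hsq, htnn, hF0nn]
  rw [← hF0]
  exact final


end DiscreteKhintchine

section Reduction

noncomputable def mB : Measure Bool := (2:ENNReal)⁻¹ • (Measure.dirac true + Measure.dirac false)

instance : IsProbabilityMeasure mB := by
  constructor
  simp [mB]
  rw [ENNReal.inv_two_add_inv_two]

lemma csgn_meas : Measurable csgn := measurable_from_top

lemma phi_meas (d : ℕ) : Measurable (fun (x : Fin d → Bool) (i : Fin d) => csgn (x i)) :=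
  measurable_pi_lambda _ (fun i => csgn_meas.comp (measurable_pi_apply i))

lemma mB_apply (t : Set ℝ) (_ht : MeasurableSet t) :
    mB (csgn ⁻¹' t) = ((1/2 : ENNReal) • Measure.dirac (1 : ℝ) + (1/2 : ENNReal) • Measure.dirac (-1 : ℝ)) t := by
  rw [mB]
  simp only [Measure.smul_apply, Measure.add_apply, smul_eq_mul]
  rw [Measure.dirac_apply, Measure.dirac_apply, Measure.dirac_apply' _ _ht, Measure.dirac_apply' _ _ht]
  have hT : (csgn ⁻¹' t).indicator (1 : Bool → ENNReal) true = t.indicator 1 (1:ℝ) := by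
    by_cases h : (1:ℝ) ∈ t
    · rw [Set.indicator_of_mem h, Set.indicator_of_mem]
      · rfl
      · exact h
    · rw [Set.indicator_of_notMem h, Set.indicator_of_notMem]
      exact h
  have hF : (csgn ⁻¹' t).indicator (1 : Bool → ENNReal) false = t.indicator 1 (-1:ℝ) := by
    by_cases h : (-1:ℝ) ∈ t
    · rw [Set.indicator_of_mem h, Set.indicator_of_mem]
      · rfl
      · exact h
    · rw [Set.indicator_of_notMem h, Set.indicator_of_notMem]
      exact h
  rw [hT, hF, one_div, mul_add]

lemma pi_eq_cube (d : ℕ) (ν : Fin d → Measure ℝ) (hprob : ∀ i, IsProbabilityMeasure (ν i))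
    (hrad : ∀ i, ν i =
      (1/2 : ENNReal) • Measure.dirac (1 : ℝ) + (1/2 : ENNReal) • Measure.dirac (-1 : ℝ)) :
    Measure.pi ν = (Measure.pi (fun _ : Fin d => mB)).map (fun x i => csgn (x i)) := by
  apply Measure.pi_eq
  intro s hs
  rw [Measure.map_apply (phi_meas d) (MeasurableSet.univ_pi hs)]
  have hpre : (fun x (i : Fin d) => csgn (x i)) ⁻¹' (Set.pi Set.univ s)
      = Set.pi Set.univ (fun i => csgn ⁻¹' (s i)) := by
    ext x; simp [Set.mem_univ_pi]
  rw [hpre, Measure.pi_pi]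
  apply Finset.prod_congr rfl
  intro i _
  rw [hrad i, mB_apply _ (hs i)]

lemma joint_eq {Ω : Type*} [MeasurableSpace Ω] (μ : Measure Ω) [IsProbabilityMeasure μ]
    (d : ℕ) (ε : Fin d → Ω → ℝ)
    (hmeas : ∀ i, Measurable (ε i))
    (hindep : iIndepFun ε μ) :
    Measure.pi (fun i => μ.map (ε i)) = μ.map (fun ω (i : Fin d) => ε i ω) := by
  haveI hprob : ∀ i, IsProbabilityMeasure (μ.map (ε i)) :=
    fun i => Measure.isProbabilityMeasure_map (hmeas i).aemeasurable
  have hvec : Measurable (fun ω (i : Fin d) => ε i ω) :=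
    measurable_pi_lambda _ (fun i => hmeas i)
  apply Measure.pi_eq
  intro s hs
  rw [Measure.map_apply hvec (MeasurableSet.univ_pi hs)]
  have hpre : (fun ω (i : Fin d) => ε i ω) ⁻¹' (Set.pi Set.univ s)
      = ⋂ i ∈ (Finset.univ : Finset (Fin d)), ε i ⁻¹' s i := by
    ext ω; simp [Set.mem_univ_pi]
  rw [hpre, hindep.measure_inter_preimage_eq_mul Finset.univ (fun i _ => hs i)]
  apply Finset.prod_congr rfl
  intro i _
  rw [Measure.map_apply (hmeas i) (hs i)]

end Reduction

/-- Khintchine lower bound: for i.i.d. Rademacher `ε i` and `z ∈ ℝ^d`,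
`E[|Σ z_i ε_i|] ≥ ‖z‖₂ / √2`. -/
theorem khintchine_lower {Ω : Type*} [MeasurableSpace Ω] (μ : Measure Ω)
    [IsProbabilityMeasure μ] (d : ℕ) (ε : Fin d → Ω → ℝ)
    (hmeas : ∀ i, Measurable (ε i))
    (hindep : iIndepFun ε μ)
    (hrad : ∀ i, Measure.map (ε i) μ =
      (1/2 : ENNReal) • Measure.dirac (1 : ℝ) + (1/2 : ENNReal) • Measure.dirac (-1 : ℝ))
    (z : Fin d → ℝ) :
    (∫ ω, |∑ i, z i * ε i ω| ∂μ) ≥ Real.sqrt (∑ i, (z i) ^ 2) / Real.sqrt 2 := by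
  haveI hprob : ∀ i, IsProbabilityMeasure (μ.map (ε i)) :=
    fun i => Measure.isProbabilityMeasure_map (hmeas i).aemeasurable
  have hvec : Measurable (fun ω (i : Fin d) => ε i ω) :=
    measurable_pi_lambda _ (fun i => hmeas i)
  have hjoint := joint_eq μ d ε hmeas hindep
  have hP := pi_eq_cube d (fun i => μ.map (ε i)) hprob (fun i => hrad i)
  have hg : Measurable (fun y : Fin d → ℝ => |∑ i, z i * y i|) :=
    (Finset.measurable_sum Finset.univ (fun i _ => measurable_const.mul (measurable_pi_apply i))).abs
  have hsing : ∀ x : Fin d → Bool, (Measure.pi (fun _ : Fin d => mB)) {x} = ((2:ENNReal)⁻¹) ^ d := by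
    intro x
    rw [← Set.univ_pi_singleton, Measure.pi_pi]
    have hmB : ∀ b : Bool, mB {b} = 2⁻¹ := by
      intro b
      rw [mB]
      simp only [Measure.smul_apply, Measure.add_apply, smul_eq_mul]
      cases b <;> simp [Measure.dirac_apply]
    simp [hmB]
  rw [ge_iff_le]
  have h2d : (0:ℝ) < 2^d := by positivity
  calc Real.sqrt (∑ i, z i ^ 2) / Real.sqrt 2
      = ((2:ℝ)^d)⁻¹ * (Real.sqrt (∑ i, z i ^ 2) / Real.sqrt 2 * 2^d) := by
        field_simp
    _ ≤ ((2:ℝ)^d)⁻¹ * ∑ x : Fin d → Bool, |∑ i, z i * csgn (x i)| := by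
        apply mul_le_mul_of_nonneg_left (discrete_khintchine z) (by positivity)
    _ = ∑ x : Fin d → Bool, (((Measure.pi (fun _ : Fin d => mB)) {x}).toReal) • |∑ i, z i * csgn (x i)| := by
        rw [Finset.mul_sum]
        apply Finset.sum_congr rfl
        intro x _
        rw [hsing x]
        rw [smul_eq_mul]
        congr 1
        rw [ENNReal.toReal_pow]
        norm_num
        rw [one_div, inv_pow]
    _ = ∫ x, |∑ i, z i * csgn (x i)| ∂(Measure.pi (fun _ : Fin d => mB)) :=
        (integral_fintype (Integrable.of_finite)).symm
    _ = ∫ y, |∑ i, z i * y i| ∂((Measure.pi (fun _ : Fin d => mB)).map (fun x i => csgn (x i))) := by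
        rw [integral_map (phi_meas d).aemeasurable hg.aestronglyMeasurable]
    _ = ∫ y, |∑ i, z i * y i| ∂(μ.map (fun ω (i : Fin d) => ε i ω)) := by
        rw [← hP, hjoint]
    _ = ∫ ω, |∑ i, z i * ε i ω| ∂μ := by
        rw [integral_map hvec.aemeasurable hg.aestronglyMeasurable]
end

section
/- Let z ∈ ℝ^d and X = Σ_i z_i ε_i with ε_i i.i.d. Rademacher. Then E[X²] = ‖z‖₂², and hence E[|X|]² / E[X²] ≥ 1/2. -/
open MeasureTheory ProbabilityTheory Finset

namespace RadAux

noncomputable def sg (b : Bool) : ℝ := if b then 1 else -1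

lemma sg_mul_self (b : Bool) : sg b * sg b = 1 := by cases b <;> simp [sg]

lemma sg_not (b : Bool) : sg (!b) = - sg b := by cases b <;> simp [sg]

lemma sg_abs (b : Bool) : |sg b| ≤ 1 := by cases b <;> simp [sg]

variable {d : ℕ}

/-- flip coordinate j -/
def fl (j : Fin d) (x : Fin d → Bool) : Fin d → Bool := Function.update x j (!x j)

lemma fl_apply_same (j : Fin d) (x : Fin d → Bool) : fl j x j = !x j := by
  simp [fl]

lemma fl_apply_ne (j i : Fin d) (x : Fin d → Bool) (h : i ≠ j) : fl j x i = x i := by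
  simp [fl, Function.update_of_ne h]

lemma fl_involutive (j : Fin d) : Function.Involutive (fl j) := by
  intro x
  funext i
  by_cases h : i = j
  · subst h; simp [fl]
  · simp [fl, Function.update_of_ne h]

/-- reindexing a cube sum by a flip -/
lemma sum_fl (j : Fin d) (g : (Fin d → Bool) → ℝ) :
    ∑ x : Fin d → Bool, g (fl j x) = ∑ x : Fin d → Bool, g x :=
  Fintype.sum_equiv (fl_involutive j).toPerm _ _ (fun x => rfl)

lemma sum_neg_cube (g : (Fin d → Bool) → ℝ) :
    ∑ x : Fin d → Bool, g (fun i => !x i) = ∑ x : Fin d → Bool, g x :=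
  Fintype.sum_equiv (Function.Involutive.toPerm _ (fun x => by funext i; simp only []; cases h : x i <;> simp [h])) _ _ (fun x => rfl)

lemma sum_flip_zero (j : Fin d) (g : (Fin d → Bool) → ℝ)
    (h : ∀ x, g (fl j x) = - g x) : ∑ x : Fin d → Bool, g x = 0 := by
  have h1 := sum_fl j g
  simp only [h] at h1
  rw [Finset.sum_neg_distrib] at h1
  linarith

lemma card_cube : (Fintype.card (Fin d → Bool) : ℝ) = 2 ^ d := by
  simp [Fintype.card_fun]

end RadAux

namespace RadAux

variable {d : ℕ}

noncomputable def chi (S : Finset (Fin d)) (x : Fin d → Bool) : ℝ := ∏ i ∈ S, sg (x i)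

noncomputable def coeff (f : (Fin d → Bool) → ℝ) (S : Finset (Fin d)) : ℝ :=
  ∑ x : Fin d → Bool, f x * chi S x

/-- dual orthogonality: sum over all S of χ_S(x) χ_S(y) -/
lemma sum_chi_mul_chi (x y : Fin d → Bool) :
    ∑ S : Finset (Fin d), chi S x * chi S y = if x = y then (2:ℝ)^d else 0 := by
  have h1 : ∀ S : Finset (Fin d), chi S x * chi S y = ∏ i ∈ S, (sg (x i) * sg (y i)) := by
    intro S; rw [chi, chi, ← Finset.prod_mul_distrib]
  simp only [h1]
  have h2 : ∑ S : Finset (Fin d), ∏ i ∈ S, (sg (x i) * sg (y i))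
      = ∏ i : Fin d, (sg (x i) * sg (y i) + 1) := by
    rw [Finset.prod_add]
    rw [← Finset.powerset_univ]
    refine (Finset.sum_congr rfl fun S _ => ?_).symm
    simp
  rw [h2]
  by_cases hxy : x = y
  · subst hxy
    simp only [sg_mul_self, if_pos rfl]
    norm_num
  · rw [if_neg hxy]
    obtain ⟨i, hi⟩ : ∃ i, x i ≠ y i := by
      by_contra h
      push_neg at h
      exact hxy (funext h)
    apply Finset.prod_eq_zero (Finset.mem_univ i)
    cases hx : x i <;> cases hy : y i <;> simp_all [sg]
lemma parseval (f : (Fin d → Bool) → ℝ) :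
    ∑ S : Finset (Fin d), (coeff f S)^2 = 2^d * ∑ x : Fin d → Bool, (f x)^2 := by
  have h : ∀ S : Finset (Fin d), (coeff f S)^2
      = ∑ x : Fin d → Bool, ∑ y : Fin d → Bool, f x * f y * (chi S x * chi S y) := by
    intro S
    rw [sq, coeff, Finset.sum_mul_sum]
    exact Finset.sum_congr rfl fun x _ => Finset.sum_congr rfl fun y _ => by ring
  simp only [h]
  rw [Finset.sum_comm]
  have h2 : ∀ x : Fin d → Bool,
      (∑ S : Finset (Fin d), ∑ y : Fin d → Bool, f x * f y * (chi S x * chi S y))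
        = 2^d * (f x)^2 := by
    intro x
    rw [Finset.sum_comm]
    have h3 : ∀ y, (∑ S : Finset (Fin d), f x * f y * (chi S x * chi S y))
        = f x * f y * (if x = y then (2:ℝ)^d else 0) := by
      intro y; rw [← Finset.mul_sum, sum_chi_mul_chi]
    simp only [h3]
    rw [Finset.sum_eq_single x]
    · rw [if_pos rfl]; ring
    · intro y _ hy
      rw [if_neg fun h => hy h.symm, mul_zero]
    · intro h; exact absurd (Finset.mem_univ x) h
  simp only [h2]
  rw [← Finset.mul_sum]

end RadAux

namespace RadAux

variable {d : ℕ}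

lemma chi_fl (S : Finset (Fin d)) (j : Fin d) (x : Fin d → Bool) :
    chi S (fl j x) = if j ∈ S then - chi S x else chi S x := by
  by_cases hj : j ∈ S
  · rw [if_pos hj, chi, chi, ← Finset.mul_prod_erase S _ hj, ← Finset.mul_prod_erase S _ hj]
    rw [fl_apply_same, sg_not]
    have : ∀ i ∈ S.erase j, sg (fl j x i) = sg (x i) := by
      intro i hi
      rw [fl_apply_ne j i x (Finset.ne_of_mem_erase hi)]
    rw [Finset.prod_congr rfl this]
    ring
  · rw [if_neg hj, chi, chi]
    refine Finset.prod_congr rfl fun i hi => ?_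
    rw [fl_apply_ne j i x (fun h => hj (h ▸ hi))]

lemma chi_neg (S : Finset (Fin d)) (x : Fin d → Bool) :
    chi S (fun i => !x i) = (-1)^(S.card) * chi S x := by
  rw [chi, chi]
  have : ∀ i ∈ S, sg (!x i) = -1 * sg (x i) := fun i _ => by rw [sg_not]; ring
  rw [Finset.prod_congr rfl this, Finset.prod_mul_distrib, Finset.prod_const]

/-- coefficients of even functions vanish on odd sets -/
lemma coeff_even (f : (Fin d → Bool) → ℝ) (hf : ∀ x, f (fun i => !x i) = f x)
    (S : Finset (Fin d)) (hS : ¬ Even S.card) : coeff f S = 0 := by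
  have h1 : coeff f S = ∑ x : Fin d → Bool, f (fun i => !x i) * chi S (fun i => !x i) :=
    (sum_neg_cube (fun x => f x * chi S x)).symm
  have key : ∀ x : Fin d → Bool, f (fun i => !x i) * chi S (fun i => !x i) = - (f x * chi S x) := by
    intro x
    rw [hf x, chi_neg, (Nat.not_even_iff_odd.mp hS).neg_one_pow]
    ring
  have h2 : coeff f S = - coeff f S := by
    conv_lhs => rw [h1]
    simp only [key, Finset.sum_neg_distrib]
    rfl
  linarith

/-- coefficient of the flip-difference -/
lemma coeff_diff (f : (Fin d → Bool) → ℝ) (j : Fin d) (S : Finset (Fin d)) :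
    coeff (fun x => (f x - f (fl j x))/2) S = if j ∈ S then coeff f S else 0 := by
  have h1 : ∑ x : Fin d → Bool, f (fl j x) * chi S x
      = ∑ x : Fin d → Bool, f x * chi S (fl j x) := by
    rw [← sum_fl j (fun x => f x * chi S (fl j x))]
    refine Finset.sum_congr rfl fun x _ => ?_
    rw [fl_involutive j x]
  have h2 : coeff (fun x => (f x - f (fl j x))/2) S
      = (coeff f S - ∑ x : Fin d → Bool, f x * chi S (fl j x)) / 2 := by
    calc coeff (fun x => (f x - f (fl j x))/2) S
        = ∑ x : Fin d → Bool, (f x * chi S x - f (fl j x) * chi S x)/2 :=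
          Finset.sum_congr rfl (fun x _ => by ring)
      _ = (∑ x : Fin d → Bool, (f x * chi S x - f (fl j x) * chi S x))/2 :=
          (Finset.sum_div _ _ _).symm
      _ = (∑ x : Fin d → Bool, f x * chi S x - ∑ x : Fin d → Bool, f (fl j x) * chi S x)/2 := by
          rw [Finset.sum_sub_distrib]
      _ = (coeff f S - ∑ x : Fin d → Bool, f x * chi S (fl j x)) / 2 := by rw [h1]; rfl
  rw [h2]
  by_cases hj : j ∈ S
  · rw [if_pos hj]
    have : ∀ x : Fin d → Bool, f x * chi S (fl j x) = - (f x * chi S x) := by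
      intro x; rw [chi_fl, if_pos hj]; ring
    simp only [this, Finset.sum_neg_distrib]
    rw [coeff]; ring
  · rw [if_neg hj]
    have : ∀ x : Fin d → Bool, f x * chi S (fl j x) = f x * chi S x := by
      intro x; rw [chi_fl, if_neg hj]
    simp only [this]
    rw [coeff]; ring

/-- level-weighted Parseval -/
lemma parseval_deriv (f : (Fin d → Bool) → ℝ) :
    ∑ S : Finset (Fin d), (S.card : ℝ) * (coeff f S)^2
      = 2^d * ∑ j : Fin d, ∑ x : Fin d → Bool, ((f x - f (fl j x))/2)^2 := by
  have h1 : ∀ j : Fin d, ∑ S : Finset (Fin d), (coeff (fun x => (f x - f (fl j x))/2) S)^2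
      = ∑ S : Finset (Fin d), (if j ∈ S then (coeff f S)^2 else 0) := by
    intro j
    refine Finset.sum_congr rfl fun S _ => ?_
    rw [coeff_diff]
    by_cases hj : j ∈ S
    · rw [if_pos hj, if_pos hj]
    · rw [if_neg hj, if_neg hj]; ring
  have h2 : ∑ j : Fin d, ∑ S : Finset (Fin d), (if j ∈ S then (coeff f S)^2 else 0)
      = ∑ S : Finset (Fin d), (S.card : ℝ) * (coeff f S)^2 := by
    rw [Finset.sum_comm]
    refine Finset.sum_congr rfl fun S _ => ?_
    rw [Finset.sum_ite_mem, Finset.univ_inter, Finset.sum_const, nsmul_eq_mul]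
  rw [← h2]
  have h3 : ∀ j : Fin d, ∑ S : Finset (Fin d), (coeff (fun x => (f x - f (fl j x))/2) S)^2
      = 2^d * ∑ x : Fin d → Bool, ((f x - f (fl j x))/2)^2 := fun j => parseval _
  simp only [← h1]
  rw [Finset.mul_sum]
  exact Finset.sum_congr rfl fun j _ => h3 j

end RadAux

namespace RadAux

variable {d : ℕ}

/-- the cube second moment -/
lemma cube_sum_sq (z : Fin d → ℝ) :
    ∑ x : Fin d → Bool, (∑ i, z i * sg (x i))^2 = 2^d * ∑ i, (z i)^2 := by
  have expand : ∀ x : Fin d → Bool, (∑ i, z i * sg (x i))^2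
      = ∑ i, ∑ j, (z i * z j) * (sg (x i) * sg (x j)) := by
    intro x
    rw [sq, Finset.sum_mul_sum]
    exact Finset.sum_congr rfl fun i _ => Finset.sum_congr rfl fun j _ => by ring
  simp only [expand]
  rw [Finset.sum_comm]
  have inner : ∀ i : Fin d, ∑ x : Fin d → Bool, ∑ j, (z i * z j) * (sg (x i) * sg (x j))
      = 2^d * (z i)^2 := by
    intro i
    rw [Finset.sum_comm]
    have hij : ∀ j : Fin d, ∑ x : Fin d → Bool, (z i * z j) * (sg (x i) * sg (x j))
        = if j = i then (2:ℝ)^d * (z i)^2 else 0 := by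
      intro j
      by_cases h : j = i
      · subst h
        rw [if_pos rfl]
        have : ∀ x : Fin d → Bool, (z j * z j) * (sg (x j) * sg (x j)) = (z j)^2 := by
          intro x; rw [sg_mul_self]; ring
        simp only [this, Finset.sum_const]
        rw [nsmul_eq_mul, ← card_cube]
        rfl
      · rw [if_neg h]
        apply sum_flip_zero i
        intro x
        have h1 : sg (fl i x i) = - sg (x i) := by rw [fl_apply_same, sg_not]
        have h2 : sg (fl i x j) = sg (x j) := by rw [fl_apply_ne i j x h]
        rw [h1, h2]; ring
    simp only [hij]
    rw [Finset.sum_ite_eq' Finset.univ i (fun _ => (2:ℝ)^d * (z i)^2), if_pos (Finset.mem_univ i)]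
  simp only [inner]
  rw [Finset.mul_sum]

lemma cube_F_even (z : Fin d → ℝ) (x : Fin d → Bool) :
    |∑ i, z i * sg ((fun i => !x i) i)| = |∑ i, z i * sg (x i)| := by
  have : ∀ i : Fin d, z i * sg (!x i) = -(z i * sg (x i)) := by
    intro i; rw [sg_not]; ring
  simp only [this, Finset.sum_neg_distrib, abs_neg]

lemma cube_F_deriv (z : Fin d → ℝ) (j : Fin d) (x : Fin d → Bool) :
    ((|∑ i, z i * sg (x i)| - |∑ i, z i * sg (fl j x i)|)/2)^2 ≤ (z j)^2 := by
  have hsum : ∑ i, z i * sg (fl j x i) = ∑ i, z i * sg (x i) - 2 * (z j * sg (x j)) := by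
    rw [← Finset.sum_erase_add _ _ (Finset.mem_univ j), ← Finset.sum_erase_add _ _ (Finset.mem_univ j)]
    have : ∀ i ∈ Finset.univ.erase j, z i * sg (fl j x i) = z i * sg (x i) := by
      intro i hi; rw [fl_apply_ne j i x (Finset.ne_of_mem_erase hi)]
    rw [Finset.sum_congr rfl this, fl_apply_same, sg_not]
    ring
  have habs : |(|∑ i, z i * sg (x i)| - |∑ i, z i * sg (fl j x i)|)| ≤ 2 * |z j| := by
    refine le_trans (abs_abs_sub_abs_le_abs_sub _ _) ?_
    rw [hsum]
    have : (∑ i, z i * sg (x i)) - (∑ i, z i * sg (x i) - 2 * (z j * sg (x j)))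
        = 2 * (z j * sg (x j)) := by ring
    rw [this, abs_mul, abs_mul]
    have := sg_abs (x j)
    have h0 : (0:ℝ) ≤ |z j| := abs_nonneg _
    calc |(2:ℝ)| * (|z j| * |sg (x j)|) ≤ |(2:ℝ)| * (|z j| * 1) := by
          apply mul_le_mul_of_nonneg_left (mul_le_mul_of_nonneg_left this h0) (abs_nonneg 2)
      _ = 2 * |z j| := by rw [abs_two]; ring
  have h2 : |(|∑ i, z i * sg (x i)| - |∑ i, z i * sg (fl j x i)|)/2| ≤ |z j| := by
    rw [abs_div, abs_two]
    linarith
  calc ((|∑ i, z i * sg (x i)| - |∑ i, z i * sg (fl j x i)|)/2)^2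
      = |(|∑ i, z i * sg (x i)| - |∑ i, z i * sg (fl j x i)|)/2|^2 := (sq_abs _).symm
    _ ≤ |z j|^2 := by
        apply pow_le_pow_left₀ (abs_nonneg _) h2
    _ = (z j)^2 := sq_abs _

/-- main cube Khintchine inequality -/
lemma cube_khintchine (z : Fin d → ℝ) :
    ((2:ℝ)^d)^2 / 2 * (∑ i, (z i)^2) ≤ (∑ x : Fin d → Bool, |∑ i, z i * sg (x i)|)^2 := by
  set F : (Fin d → Bool) → ℝ := fun x => |∑ i, z i * sg (x i)| with hF
  set N : ℝ := (2:ℝ)^d with hN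
  have hN0 : 0 < N := by positivity
  -- Parseval
  have hpar : ∑ S : Finset (Fin d), (coeff F S)^2 = N * ∑ x : Fin d → Bool, (F x)^2 :=
    parseval F
  -- second moment
  have hsq : ∑ x : Fin d → Bool, (F x)^2 = N * ∑ i, (z i)^2 := by
    rw [hF]
    simp only [sq_abs]
    exact cube_sum_sq z
  -- derivative bound
  have hder : ∑ S : Finset (Fin d), (S.card : ℝ) * (coeff F S)^2 ≤ N^2 * ∑ i, (z i)^2 := by
    rw [parseval_deriv F]
    have : ∀ j : Fin d, ∑ x : Fin d → Bool, ((F x - F (fl j x))/2)^2 ≤ N * (z j)^2 := by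
      intro j
      calc ∑ x : Fin d → Bool, ((F x - F (fl j x))/2)^2
          ≤ ∑ x : Fin d → Bool, (z j)^2 :=
            Finset.sum_le_sum fun x _ => cube_F_deriv z j x
        _ = N * (z j)^2 := by rw [Finset.sum_const, nsmul_eq_mul, Finset.card_univ, hN, ← card_cube]
    calc N * ∑ j : Fin d, ∑ x : Fin d → Bool, ((F x - F (fl j x))/2)^2
        ≤ N * ∑ j : Fin d, N * (z j)^2 := by
          apply mul_le_mul_of_nonneg_left (Finset.sum_le_sum fun j _ => this j) hN0.le
      _ = N^2 * ∑ i, (z i)^2 := by rw [← Finset.mul_sum]; ring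
  -- evenness
  have heven : ∀ S : Finset (Fin d), ¬ Even S.card → coeff F S = 0 := by
    intro S hS
    exact coeff_even F (fun x => cube_F_even z x) S hS
  -- compare nonempty part with weighted sum
  have hcmp : ∑ S ∈ (Finset.univ : Finset (Finset (Fin d))).erase ∅, (coeff F S)^2
      ≤ (1/2) * ∑ S : Finset (Fin d), (S.card : ℝ) * (coeff F S)^2 := by
    have hz0 : ∑ S : Finset (Fin d), (S.card:ℝ) * (coeff F S)^2
        = ∑ S ∈ (Finset.univ : Finset (Finset (Fin d))).erase ∅, (S.card:ℝ) * (coeff F S)^2 :=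
      (Finset.sum_erase _ (by simp)).symm
    rw [hz0, Finset.mul_sum]
    refine Finset.sum_le_sum fun S hS => ?_
    have hSne : S ≠ ∅ := Finset.ne_of_mem_erase hS
    by_cases hc : coeff F S = 0
    · rw [hc]; simp
    · have hev : Even S.card := by
        by_contra h; exact hc (heven S h)
      have hcard : 2 ≤ S.card := by
        rcases hev with ⟨k, hk⟩
        have : S.card ≠ 0 := fun h => hSne (Finset.card_eq_zero.mp h)
        omega
      have h1 : (1:ℝ) ≤ (1/2) * (S.card:ℝ) := by
        have : (2:ℝ) ≤ (S.card:ℝ) := by exact_mod_cast hcard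
        linarith
      nlinarith [sq_nonneg (coeff F S)]
  have hc0 : coeff F ∅ = ∑ x : Fin d → Bool, F x := by
    simp [coeff, chi]
  have h5 : ∑ S : Finset (Fin d), (coeff F S)^2
      = (coeff F ∅)^2 + ∑ S ∈ (Finset.univ : Finset (Finset (Fin d))).erase ∅, (coeff F S)^2 :=
    (Finset.add_sum_erase _ _ (Finset.mem_univ ∅)).symm
  have key : N * (N * ∑ i, (z i)^2)
      ≤ (∑ x : Fin d → Bool, F x)^2 + 1/2 * (N^2 * ∑ i, (z i)^2) := by
    calc N * (N * ∑ i, (z i)^2) = N * ∑ x : Fin d → Bool, (F x)^2 := by rw [hsq]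
      _ = ∑ S : Finset (Fin d), (coeff F S)^2 := hpar.symm
      _ = (coeff F ∅)^2 + ∑ S ∈ (Finset.univ : Finset (Finset (Fin d))).erase ∅, (coeff F S)^2 := h5
      _ ≤ (coeff F ∅)^2 + (1/2) * ∑ S : Finset (Fin d), (S.card : ℝ) * (coeff F S)^2 := by linarith
      _ ≤ (∑ x : Fin d → Bool, F x)^2 + 1/2 * (N^2 * ∑ i, (z i)^2) := by
          rw [hc0]; linarith
  have hNsq : N^2 = N * N := sq N
  calc N^2 / 2 * (∑ i, (z i)^2) = N * (N * ∑ i, (z i)^2) - 1/2 * (N^2 * ∑ i, (z i)^2) := by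
        rw [hNsq]; ring
    _ ≤ (∑ x : Fin d → Bool, F x)^2 := by linarith

end RadAux

namespace RadAux


variable {Ω : Type*} [MeasurableSpace Ω] {μ : Measure Ω} [IsProbabilityMeasure μ]
  {d : ℕ} {ε : Fin d → Ω → ℝ}

/-- a.e. each Rademacher variable is bounded by 1 -/
lemma eps_ae (hmeas : ∀ i, Measurable (ε i))
    (hrad : ∀ i, Measure.map (ε i) μ =
      (1/2 : ENNReal) • Measure.dirac (1 : ℝ) + (1/2 : ENNReal) • Measure.dirac (-1 : ℝ)) :
    ∀ᵐ ω ∂μ, ∀ i, |ε i ω| ≤ 1 := by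
  rw [ae_all_iff]
  intro i
  have hS : MeasurableSet {x : ℝ | ¬ |x| ≤ 1} := by
    have : IsOpen {x : ℝ | 1 < |x|} := isOpen_lt continuous_const continuous_abs
    simpa [not_le] using this.measurableSet
  rw [ae_iff]
  have heq : {ω | ¬ |ε i ω| ≤ 1} = (ε i) ⁻¹' {x : ℝ | ¬ |x| ≤ 1} := rfl
  rw [heq, ← Measure.map_apply (hmeas i) hS, hrad i]
  rw [Measure.add_apply, Measure.smul_apply, Measure.smul_apply,
    Measure.dirac_apply' _ hS, Measure.dirac_apply' _ hS]
  rw [Set.indicator_of_notMem (by norm_num), Set.indicator_of_notMem (by norm_num)]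
  simp

/-- integrability of continuous functions of partial sums -/
lemma integrable_comp (hmeas : ∀ i, Measurable (ε i))
    (hb : ∀ᵐ ω ∂μ, ∀ i, |ε i ω| ≤ 1)
    (z : Fin d → ℝ) (f : ℝ → ℝ) (hf : Continuous f) (s : Finset (Fin d)) (t : ℝ) :
    Integrable (fun ω => f (t + ∑ i ∈ s, z i * ε i ω)) μ := by
  set B : ℝ := |t| + ∑ i ∈ s, |z i| with hB
  obtain ⟨C, hC⟩ :=
    (isCompact_Icc (a := -B) (b := B)).exists_bound_of_continuousOn hf.continuousOn
  refine Integrable.mono' (integrable_const C) ?_ ?_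
  · exact (hf.measurable.comp (measurable_const.add
      (Finset.measurable_sum s fun i _ => (hmeas i).const_mul (z i)))).aestronglyMeasurable
  · filter_upwards [hb] with ω hω
    have harg : t + ∑ i ∈ s, z i * ε i ω ∈ Set.Icc (-B) B := by
      have h1 : |t + ∑ i ∈ s, z i * ε i ω| ≤ B := by
        refine le_trans (abs_add_le _ _) ?_
        rw [hB]
        gcongr
        refine le_trans (Finset.abs_sum_le_sum_abs _ _) ?_
        refine Finset.sum_le_sum fun i _ => ?_
        rw [abs_mul]
        calc |z i| * |ε i ω| ≤ |z i| * 1 :=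
              mul_le_mul_of_nonneg_left (hω i) (abs_nonneg _)
          _ = |z i| := mul_one _
      exact abs_le.mp h1
    exact hC _ harg

lemma smul_prod_meas {α β : Type*} [MeasurableSpace α] [MeasurableSpace β]
    (c : ENNReal) (hc : c ≠ ⊤) (m : Measure α) [IsFiniteMeasure m]
    (ν : Measure β) [IsFiniteMeasure ν] :
    (c • m).prod ν = c • (m.prod ν) := by
  haveI : IsFiniteMeasure (c • m) := by
    constructor
    rw [Measure.smul_apply, smul_eq_mul]
    exact ENNReal.mul_lt_top hc.lt_top (measure_lt_top m _)
  refine Measure.prod_eq fun s t hs ht => ?_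
  rw [Measure.smul_apply, Measure.prod_prod, Measure.smul_apply, smul_eq_mul, smul_eq_mul,
    mul_assoc]

end RadAux

open MeasureTheory ProbabilityTheory

namespace RadAux

variable {Ω : Type*} [MeasurableSpace Ω] {μ : Measure Ω} [IsProbabilityMeasure μ]
  {d : ℕ} {ε : Fin d → Ω → ℝ}

/-- the one-variable conditioning step -/
lemma step (hmeas : ∀ i, Measurable (ε i))
    (hindep : iIndepFun ε μ)
    (hrad : ∀ i, Measure.map (ε i) μ =
      (1/2 : ENNReal) • Measure.dirac (1 : ℝ) + (1/2 : ENNReal) • Measure.dirac (-1 : ℝ))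
    (z : Fin d → ℝ) (f : ℝ → ℝ) (hf : Continuous f)
    {j : Fin d} {s : Finset (Fin d)} (hj : j ∉ s) (t : ℝ) :
    ∫ ω, f (t + (z j * ε j ω + ∑ i ∈ s, z i * ε i ω)) ∂μ
      = ((∫ ω, f ((t + z j) + ∑ i ∈ s, z i * ε i ω) ∂μ)
        + (∫ ω, f ((t - z j) + ∑ i ∈ s, z i * ε i ω) ∂μ))/2 := by
  classical
  have hb := eps_ae hmeas hrad
  set Y : Ω → ℝ := fun ω => ∑ i ∈ s, z i * ε i ω with hYdef
  have hY : Measurable Y := Finset.measurable_sum s fun i _ => (hmeas i).const_mul (z i)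
  -- independence of ε j and Y
  have hgmeas : ∀ i : Fin d, Measurable (fun x : ℝ => if i = j then x else z i * x) := by
    intro i
    by_cases h : i = j
    · simp only [h, if_true]
      exact measurable_id
    · simp only [h, if_false]
      exact measurable_const.mul measurable_id
  have hcomp := hindep.comp (fun i => fun x : ℝ => if i = j then x else z i * x) hgmeas
  have hmeas' : ∀ i : Fin d, Measurable ((fun x : ℝ => if i = j then x else z i * x) ∘ ε i) :=
    fun i => (hgmeas i).comp (hmeas i)
  have h1 := hcomp.indepFun_finsetSum_of_notMem hmeas' hj
  have hsum_eq : (∑ i ∈ s, (fun x : ℝ => if i = j then x else z i * x) ∘ ε i) = Y := by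
    funext ω
    rw [Finset.sum_apply]
    refine Finset.sum_congr rfl fun i hi => ?_
    have : i ≠ j := fun h => hj (h ▸ hi)
    simp [Function.comp, this]
  have hj_eq : ((fun x : ℝ => if j = j then x else z j * x) ∘ ε j) = ε j := by
    funext ω; simp [Function.comp]
  rw [hsum_eq, hj_eq] at h1
  have hindep2 : IndepFun (ε j) Y μ := h1.symm
  -- joint law
  have hmap : μ.map (fun ω => (ε j ω, Y ω)) = (μ.map (ε j)).prod (μ.map Y) :=
    (indepFun_iff_map_prod_eq_prod_map_map (hmeas j).aemeasurable hY.aemeasurable).mp hindep2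
  set ν : Measure ℝ := μ.map Y with hνdef
  haveI : IsProbabilityMeasure ν := Measure.isProbabilityMeasure_map hY.aemeasurable
  -- decompose the product measure
  have hdec : (μ.map (ε j)).prod ν
      = (1/2 : ENNReal) • ν.map (Prod.mk (1:ℝ)) + (1/2 : ENNReal) • ν.map (Prod.mk (-1:ℝ)) := by
    rw [hrad j, Measure.add_prod, smul_prod_meas _ (by norm_num) _ _,
      smul_prod_meas _ (by norm_num) _ _, Measure.dirac_prod, Measure.dirac_prod]
  set F : ℝ × ℝ → ℝ := fun p => f (t + (z j * p.1 + p.2)) with hFdef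
  have hF : Continuous F := by
    apply hf.comp
    exact continuous_const.add ((continuous_const.mul continuous_fst).add continuous_snd)
  -- integrability of the two pieces
  have hint : ∀ c : ℝ, Integrable F (ν.map (Prod.mk c)) := by
    intro c
    rw [integrable_map_measure hF.aestronglyMeasurable measurable_prodMk_left.aemeasurable]
    have : (F ∘ Prod.mk c) = fun y => f (t + (z j * c + y)) := rfl
    rw [this, hνdef, integrable_map_measure _ hY.aemeasurable]
    · have h2 := integrable_comp hmeas hb z f hf s (t + z j * c)
      refine h2.congr (Filter.Eventually.of_forall fun ω => ?_)
      simp only [Function.comp]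
      ring_nf
      rfl
    · exact (hf.comp (continuous_const.add (continuous_const.add continuous_id))).aestronglyMeasurable
  -- the computation
  have hpair : Measurable (fun ω => (ε j ω, Y ω)) := (hmeas j).prodMk hY
  have key : ∫ ω, F (ε j ω, Y ω) ∂μ
      = (1/2) * (∫ p, F p ∂(ν.map (Prod.mk (1:ℝ))))
        + (1/2) * (∫ p, F p ∂(ν.map (Prod.mk (-1:ℝ)))) := by
    rw [← integral_map hpair.aemeasurable hF.aestronglyMeasurable, hmap, hdec]
    rw [integral_add_measure ((hint 1).smul_measure (by norm_num))
      ((hint (-1)).smul_measure (by norm_num))]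
    rw [integral_smul_measure, integral_smul_measure]
    norm_num
  have hone : ∫ p, F p ∂(ν.map (Prod.mk (1:ℝ)))
      = ∫ ω, f ((t + z j) + Y ω) ∂μ := by
    rw [integral_map measurable_prodMk_left.aemeasurable hF.aestronglyMeasurable, hνdef,
      integral_map hY.aemeasurable]
    · refine integral_congr_ae (Filter.Eventually.of_forall fun ω => ?_)
      show f (t + (z j * 1 + Y ω)) = f ((t + z j) + Y ω)
      ring_nf
    · exact (hf.comp (by continuity)).aestronglyMeasurable
  have hmone : ∫ p, F p ∂(ν.map (Prod.mk (-1:ℝ)))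
      = ∫ ω, f ((t - z j) + Y ω) ∂μ := by
    rw [integral_map measurable_prodMk_left.aemeasurable hF.aestronglyMeasurable, hνdef,
      integral_map hY.aemeasurable]
    · refine integral_congr_ae (Filter.Eventually.of_forall fun ω => ?_)
      show f (t + (z j * (-1) + Y ω)) = f ((t - z j) + Y ω)
      ring_nf
    · exact (hf.comp (by continuity)).aestronglyMeasurable
  have lhs_eq : ∫ ω, f (t + (z j * ε j ω + ∑ i ∈ s, z i * ε i ω)) ∂μ
      = ∫ ω, F (ε j ω, Y ω) ∂μ := rfl
  rw [lhs_eq, key, hone, hmone]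
  ring

end RadAux

namespace RadAux

open MeasureTheory ProbabilityTheory

variable {d : ℕ}

lemma sum_update_split (j : Fin d) (G : (Fin d → Bool) → ℝ) :
    ∑ x : Fin d → Bool, G x
      = ((∑ x : Fin d → Bool, G (Function.update x j true))
        + ∑ x : Fin d → Bool, G (Function.update x j false))/2 := by
  have h1 : ∀ x : Fin d → Bool, G (Function.update x j true) + G (Function.update x j false)
      = G (Function.update x j (x j)) + G (Function.update x j (!x j)) := by
    intro x
    cases h : x j
    · simp only [Bool.not_false]
      exact add_comm _ _
    · simp only [Bool.not_true]
  have h2 : ∑ x : Fin d → Bool, G (Function.update x j (x j)) = ∑ x : Fin d → Bool, G x :=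
    Finset.sum_congr rfl fun x _ => by rw [Function.update_eq_self]
  have h3 : ∑ x : Fin d → Bool, G (Function.update x j (!x j)) = ∑ x : Fin d → Bool, G x :=
    sum_fl j G
  have h4 : (∑ x : Fin d → Bool, G (Function.update x j true))
      + ∑ x : Fin d → Bool, G (Function.update x j false)
      = 2 * ∑ x : Fin d → Bool, G x := by
    rw [← Finset.sum_add_distrib]
    calc ∑ x : Fin d → Bool, (G (Function.update x j true) + G (Function.update x j false))
        = ∑ x : Fin d → Bool, (G (Function.update x j (x j)) + G (Function.update x j (!x j))) :=
          Finset.sum_congr rfl fun x _ => h1 x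
      _ = 2 * ∑ x : Fin d → Bool, G x := by
          rw [Finset.sum_add_distrib, h2, h3]; ring
  rw [h4]; ring

variable {Ω : Type*} [MeasurableSpace Ω] {μ : Measure Ω} [IsProbabilityMeasure μ]
  {ε : Fin d → Ω → ℝ}

/-- the main reduction: integrals of continuous functions of the weighted sum
are cube averages -/
lemma integral_cube (hmeas : ∀ i, Measurable (ε i))
    (hindep : iIndepFun ε μ)
    (hrad : ∀ i, Measure.map (ε i) μ =
      (1/2 : ENNReal) • Measure.dirac (1 : ℝ) + (1/2 : ENNReal) • Measure.dirac (-1 : ℝ))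
    (z : Fin d → ℝ) (f : ℝ → ℝ) (hf : Continuous f)
    (s : Finset (Fin d)) :
    ∀ t : ℝ, ∫ ω, f (t + ∑ i ∈ s, z i * ε i ω) ∂μ
      = (∑ x : Fin d → Bool, f (t + ∑ i ∈ s, z i * sg (x i))) / 2^d := by
  classical
  induction s using Finset.induction_on with
  | empty =>
      intro t
      simp only [Finset.sum_empty, add_zero]
      rw [integral_const]
      simp only [measure_univ, probReal_univ, smul_eq_mul, one_mul, Finset.sum_const]
      rw [nsmul_eq_mul, Finset.card_univ, ← card_cube]
      field_simp
  | @insert j s hj ih =>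
      intro t
      simp only [Finset.sum_insert hj]
      rw [step hmeas hindep hrad z f hf hj t, ih (t + z j), ih (t - z j)]
      have hd : ∑ x : Fin d → Bool, f (t + (z j * sg (x j) + ∑ i ∈ s, z i * sg (x i)))
          = ((∑ x : Fin d → Bool, f ((t + z j) + ∑ i ∈ s, z i * sg (x i)))
            + ∑ x : Fin d → Bool, f ((t - z j) + ∑ i ∈ s, z i * sg (x i)))/2 := by
        rw [sum_update_split j (fun x => f (t + (z j * sg (x j) + ∑ i ∈ s, z i * sg (x i))))]
        have htrue : ∀ x : Fin d → Bool,
            f (t + (z j * sg (Function.update x j true j)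
              + ∑ i ∈ s, z i * sg (Function.update x j true i)))
            = f ((t + z j) + ∑ i ∈ s, z i * sg (x i)) := by
          intro x
          have e1 : Function.update x j true j = true := Function.update_self j true x
          have e2 : ∀ i ∈ s, z i * sg (Function.update x j true i) = z i * sg (x i) := by
            intro i hi
            have hij : i ≠ j := fun h => hj (h ▸ hi)
            rw [Function.update_of_ne hij true x]
          rw [e1, Finset.sum_congr rfl e2]
          congr 1
          simp only [sg, if_true]
          ring
        have hfalse : ∀ x : Fin d → Bool,
            f (t + (z j * sg (Function.update x j false j)
              + ∑ i ∈ s, z i * sg (Function.update x j false i)))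
            = f ((t - z j) + ∑ i ∈ s, z i * sg (x i)) := by
          intro x
          have e1 : Function.update x j false j = false := Function.update_self j false x
          have e2 : ∀ i ∈ s, z i * sg (Function.update x j false i) = z i * sg (x i) := by
            intro i hi
            have hij : i ≠ j := fun h => hj (h ▸ hi)
            rw [Function.update_of_ne hij false x]
          rw [e1, Finset.sum_congr rfl e2]
          congr 1
          simp only [sg, Bool.false_eq_true, if_false]
          ring
        rw [Finset.sum_congr rfl fun x _ => htrue x, Finset.sum_congr rfl fun x _ => hfalse x]
      rw [hd]
      ring

end RadAux

open MeasureTheory ProbabilityTheory Finset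


/-- For i.i.d. Rademacher `ε i` and `z ≠ 0`: `E[X²] = ‖z‖₂²` where `X = Σ z_i ε_i`,
and hence `E[|X|]²/E[X²] ≥ 1/2`. -/
theorem rademacher_second_moment_ratio {Ω : Type*} [MeasurableSpace Ω] (μ : Measure Ω)
    [IsProbabilityMeasure μ] (d : ℕ) (ε : Fin d → Ω → ℝ)
    (hmeas : ∀ i, Measurable (ε i))
    (hindep : iIndepFun ε μ)
    (hrad : ∀ i, Measure.map (ε i) μ =
      (1/2 : ENNReal) • Measure.dirac (1 : ℝ) + (1/2 : ENNReal) • Measure.dirac (-1 : ℝ))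
    (z : Fin d → ℝ) (hz : z ≠ 0) :
    (∫ ω, (∑ i, z i * ε i ω) ^ 2 ∂μ) = ∑ i, (z i) ^ 2 ∧
      (∫ ω, |∑ i, z i * ε i ω| ∂μ) ^ 2 / (∫ ω, (∑ i, z i * ε i ω) ^ 2 ∂μ) ≥ 1/2 := by
  classical
  have hN : (0:ℝ) < (2:ℝ)^d := by positivity
  have hsq : (∫ ω, (∑ i, z i * ε i ω) ^ 2 ∂μ) = ∑ i, (z i) ^ 2 := by
    have h := RadAux.integral_cube hmeas hindep hrad z (fun u => u^2)
      (continuous_pow 2) Finset.univ 0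
    simp only [zero_add] at h
    rw [h, RadAux.cube_sum_sq z, mul_comm, mul_div_assoc, div_self (ne_of_gt hN), mul_one]
  have habs : (∫ ω, |∑ i, z i * ε i ω| ∂μ)
      = (∑ x : Fin d → Bool, |∑ i, z i * RadAux.sg (x i)|) / 2^d := by
    have h := RadAux.integral_cube hmeas hindep hrad z (fun u => |u|)
      continuous_abs Finset.univ 0
    simp only [zero_add] at h
    exact h
  have hkh := RadAux.cube_khintchine z
  have hS : 0 < ∑ i, (z i)^2 := by
    obtain ⟨i, hzi⟩ := Function.ne_iff.mp hz
    have h1 : 0 < (z i)^2 := lt_of_le_of_ne (sq_nonneg _) (Ne.symm (pow_ne_zero 2 hzi))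
    exact lt_of_lt_of_le h1 (Finset.single_le_sum (fun i _ => sq_nonneg (z i)) (mem_univ i))
  refine ⟨hsq, ?_⟩
  rw [hsq, habs, ge_iff_le, le_div_iff₀ hS, div_pow, le_div_iff₀ (by positivity)]
  calc 1/2 * (∑ i, (z i)^2) * ((2:ℝ)^d)^2
      = ((2:ℝ)^d)^2/2 * (∑ i, (z i)^2) := by ring
    _ ≤ (∑ x : Fin d → Bool, |∑ i, z i * RadAux.sg (x i)|)^2 := hkh
end

section
/- Let p ∈ [1,2), r > 0, ε > 0, ρ_p = d^(1-1/p), x₁ = r·d^(−1/p + 1/2 − ε)·(1,…,1) ∈ ℝ^d, and let v have independent coordinates with E[v_i]=0, |v_i| ≤ 1; set h(x) = ⌊⟨x,v⟩/(rρ_p)⌋. Then ‖x₁‖_p = r·d^(1/2 − ε) and P(|h(x₁) − h(0)| > 1) ≤ 2·exp(−d^(2ε)/2). -/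
open MeasureTheory ProbabilityTheory Finset

noncomputable def lpnorm (p : ENNReal) {d : ℕ} (z : Fin d → ℝ) : ℝ :=
  ‖(WithLp.equiv p (Fin d → ℝ)).symm z‖

lemma mgf_le_of_bdd {Ω : Type*} [MeasurableSpace Ω] {μ : Measure Ω} [IsProbabilityMeasure μ]
    {X : Ω → ℝ} (hX : Measurable X) (hmean : ∫ ω, X ω ∂μ = 0)
    (hbdd : ∀ ω, |X ω| ≤ 1) (t : ℝ) :
    mgf X μ t ≤ Real.exp (t ^ 2 / 2) := by
  have hXint : Integrable X μ := by
    refine Integrable.mono' (integrable_const 1) hX.aestronglyMeasurable ?_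
    filter_upwards with ω; simpa using hbdd ω
  have key : ∀ ω, Real.exp (t * X ω) ≤ Real.cosh t + Real.sinh t * X ω := by
    intro ω
    have h1 : (0:ℝ) ≤ (1 + X ω)/2 := by have := (abs_le.mp (hbdd ω)).1; linarith
    have h2 : (0:ℝ) ≤ (1 - X ω)/2 := by have := (abs_le.mp (hbdd ω)).2; linarith
    have h3 : (1 + X ω)/2 + (1 - X ω)/2 = 1 := by ring
    have := convexOn_exp.2 (Set.mem_univ t) (Set.mem_univ (-t)) h1 h2 h3
    simp only [smul_eq_mul] at this
    have harg : (1 + X ω)/2 * t + (1 - X ω)/2 * (-t) = t * X ω := by ring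
    rw [harg] at this
    calc Real.exp (t * X ω) ≤ (1 + X ω)/2 * Real.exp t + (1 - X ω)/2 * Real.exp (-t) := this
      _ = Real.cosh t + Real.sinh t * X ω := by rw [Real.cosh_eq, Real.sinh_eq]; ring
  have hint1 : Integrable (fun ω => Real.exp (t * X ω)) μ := by
    refine Integrable.mono' (integrable_const (Real.exp |t|))
      ((hX.const_mul t).exp.aestronglyMeasurable) ?_
    filter_upwards with ω
    rw [Real.norm_eq_abs, Real.abs_exp]
    refine Real.exp_le_exp.mpr ((le_abs_self _).trans ?_)
    rw [abs_mul]
    exact mul_le_of_le_one_right (abs_nonneg t) (hbdd ω)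
  calc mgf X μ t = ∫ ω, Real.exp (t * X ω) ∂μ := rfl
    _ ≤ ∫ ω, (Real.cosh t + Real.sinh t * X ω) ∂μ :=
        integral_mono hint1 ((integrable_const _).add (hXint.const_mul _)) key
    _ = Real.cosh t := by
        rw [integral_add (integrable_const _) (hXint.const_mul _),
          MeasureTheory.integral_const_mul, hmean, integral_const]
        simp
    _ ≤ Real.exp (t ^ 2 / 2) := Real.cosh_le_exp_half_sq t

section AuxSum

variable {Ω : Type*} [MeasurableSpace Ω] {μ : Measure Ω} [IsProbabilityMeasure μ]
  {d : ℕ} {v : Fin d → Ω → ℝ}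

lemma sum_exp_int (hmeas : ∀ i, Measurable (v i)) (hbdd : ∀ i ω, |v i ω| ≤ 1) (u : ℝ) :
    Integrable (fun ω => Real.exp (u * ∑ i, v i ω)) μ := by
  refine Integrable.mono' (integrable_const (Real.exp (|u| * d)))
    (((Finset.univ.measurable_sum fun i _ => hmeas i).const_mul u).exp.aestronglyMeasurable) ?_
  filter_upwards with ω
  rw [Real.norm_eq_abs, Real.abs_exp]
  refine Real.exp_le_exp.mpr ((le_abs_self _).trans ?_)
  rw [abs_mul]
  refine mul_le_mul_of_nonneg_left ?_ (abs_nonneg u)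
  calc |∑ i, v i ω| ≤ ∑ i, |v i ω| := Finset.abs_sum_le_sum_abs _ _
    _ ≤ ∑ _i : Fin d, (1:ℝ) := Finset.sum_le_sum fun i _ => hbdd i ω
    _ = d := by simp

lemma mgf_sum_le (hmeas : ∀ i, Measurable (v i))
    (hindep : iIndepFun v μ)
    (hmean : ∀ i, ∫ ω, v i ω ∂μ = 0)
    (hbdd : ∀ i ω, |v i ω| ≤ 1) (u : ℝ) :
    mgf (fun ω => ∑ i, v i ω) μ u ≤ Real.exp (d * u ^ 2 / 2) := by
  have hs : (fun ω => ∑ i, v i ω) = ∑ i : Fin d, v i := by ext ω; simp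
  rw [hs, hindep.mgf_sum hmeas]
  calc ∏ i : Fin d, mgf (v i) μ u ≤ ∏ _i : Fin d, Real.exp (u ^ 2 / 2) :=
        Finset.prod_le_prod (fun i _ => mgf_nonneg)
          (fun i _ => mgf_le_of_bdd (hmeas i) (hmean i) (hbdd i) u)
    _ = Real.exp (d * u ^ 2 / 2) := by
        rw [Finset.prod_const, ← Real.exp_nat_mul]
        congr 1; simp [Finset.card_univ]; ring

lemma chernoff_abs (hd : 0 < d) (hmeas : ∀ i, Measurable (v i))
    (hindep : iIndepFun v μ)
    (hmean : ∀ i, ∫ ω, v i ω ∂μ = 0)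
    (hbdd : ∀ i ω, |v i ω| ≤ 1) {a : ℝ} (ha : 0 ≤ a) :
    (μ {ω | a ≤ ∑ i, v i ω}).toReal + (μ {ω | ∑ i, v i ω ≤ -a}).toReal
      ≤ 2 * Real.exp (-(a ^ 2) / (2 * d)) := by
  have hd' : (0:ℝ) < d := Nat.cast_pos.mpr hd
  set u : ℝ := a / d with hu
  have hu0 : 0 ≤ u := div_nonneg ha hd'.le
  have hbound : Real.exp (-u * a) * Real.exp (d * u ^ 2 / 2) = Real.exp (-(a ^ 2) / (2 * d)) := by
    rw [← Real.exp_add]; congr 1; rw [hu]; field_simp; ring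
  have h1 : (μ {ω | a ≤ ∑ i, v i ω}).toReal ≤ Real.exp (-(a ^ 2) / (2 * d)) := by
    calc (μ {ω | a ≤ ∑ i, v i ω}).toReal
        ≤ Real.exp (-u * a) * mgf (fun ω => ∑ i, v i ω) μ u :=
          measure_ge_le_exp_mul_mgf a hu0 (sum_exp_int hmeas hbdd u)
      _ ≤ Real.exp (-u * a) * Real.exp (d * u ^ 2 / 2) :=
          mul_le_mul_of_nonneg_left (mgf_sum_le hmeas hindep hmean hbdd u) (Real.exp_pos _).le
      _ = _ := hbound
  have h2 : (μ {ω | ∑ i, v i ω ≤ -a}).toReal ≤ Real.exp (-(a ^ 2) / (2 * d)) := by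
    calc (μ {ω | ∑ i, v i ω ≤ -a}).toReal
        ≤ Real.exp (-(-u) * (-a)) * mgf (fun ω => ∑ i, v i ω) μ (-u) :=
          measure_le_le_exp_mul_mgf (-a) (neg_nonpos.mpr hu0) (sum_exp_int hmeas hbdd (-u))
      _ ≤ Real.exp (-u * a) * Real.exp (d * u ^ 2 / 2) := by
          rw [show (-(-u) * (-a)) = -u * a by ring]
          refine mul_le_mul_of_nonneg_left ?_ (Real.exp_pos _).le
          simpa using mgf_sum_le hmeas hindep hmean hbdd (-u)
      _ = _ := hbound
  linarith

end AuxSum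

/-- Tightness for `p ∈ [1,2)`: the point `x₁ = r·d^(-1/p+1/2-ε)·(1,…,1)` has
`‖x₁‖_p = r·d^(1/2-ε)` and collides with the origin except with probability
at most `2·exp(-d^(2ε)/2)`. -/
theorem tightness_p_lt_two {Ω : Type*} [MeasurableSpace Ω] (μ : Measure Ω)
    [IsProbabilityMeasure μ] (d : ℕ) (hd : 0 < d) (v : Fin d → Ω → ℝ)
    (hmeas : ∀ i, Measurable (v i))
    (hindep : iIndepFun v μ)
    (hmean : ∀ i, ∫ ω, v i ω ∂μ = 0)
    (hbdd : ∀ i ω, |v i ω| ≤ 1)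
    (p : ENNReal) (hp1 : 1 ≤ p) (hp2 : p < 2)
    (r ε : ℝ) (hr : 0 < r) (hε : 0 < ε) :
    lpnorm p (fun _ : Fin d => r * (d : ℝ) ^ (-(1/p).toReal + 1/2 - ε))
        = r * (d : ℝ) ^ ((1:ℝ)/2 - ε) ∧
      (μ {ω | 1 < |⌊(∑ i, (r * (d : ℝ) ^ (-(1/p).toReal + 1/2 - ε)) * v i ω) /
            (r * (d : ℝ) ^ ((1 - 1/p).toReal))⌋ -
          ⌊(∑ i, (0 : ℝ) * v i ω) / (r * (d : ℝ) ^ ((1 - 1/p).toReal))⌋|}).toReal ≤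
        2 * Real.exp (-((d : ℝ) ^ (2 * ε)) / 2) := by
  have hptop : p ≠ ⊤ := hp2.trans_le le_top |>.ne
  have h1p : (1:ENNReal)/p ≤ 1 := ENNReal.div_le_of_le_mul (by simpa using hp1)
  haveI : Fact (1 ≤ p) := ⟨hp1⟩
  set q : ℝ := (1/p).toReal with hqdef
  have hq : ((1:ENNReal) - 1/p).toReal = 1 - q := by
    rw [ENNReal.toReal_sub_of_le h1p (by simp)]; simp [hqdef]
  have hd' : (0:ℝ) < d := Nat.cast_pos.mpr hd
  set c : ℝ := r * (d:ℝ) ^ (-q + 1/2 - ε) with hcdef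
  have hc : (0:ℝ) < c := by positivity
  constructor
  · -- norm computation
    show ‖(WithLp.equiv p (Fin d → ℝ)).symm (fun _ => c)‖ = r * (d:ℝ) ^ ((1:ℝ)/2 - ε)
    rw [show (fun _ : Fin d => c) = Function.const (Fin d) c from rfl,
      WithLp.equiv_symm_apply, PiLp.norm_toLp_const hptop]
    rw [Real.norm_eq_abs, abs_of_pos hc, hcdef]
    push_cast
    rw [Fintype.card_fin, mul_left_comm, ← Real.rpow_add hd']
    congr 2
    ring
  · -- probability bound
    set a : ℝ := (d:ℝ) ^ ((1:ℝ)/2 + ε) with hadef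
    have ha : (0:ℝ) < a := Real.rpow_pos_of_pos hd' _
    set R : ℝ := r * (d:ℝ) ^ ((1 - 1/p : ENNReal)).toReal with hRdef
    have hcR : c / R = a⁻¹ := by
      rw [hRdef, hq, hcdef, mul_div_mul_left _ _ hr.ne', ← Real.rpow_sub hd', hadef,
        ← Real.rpow_neg hd'.le]
      congr 1
      ring
    have hsub : {ω | 1 < |⌊(∑ i, c * v i ω) / R⌋ - ⌊(∑ i, (0:ℝ) * v i ω) / R⌋|}
        ⊆ {ω | a ≤ ∑ i, v i ω} ∪ {ω | ∑ i, v i ω ≤ -a} := by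
      intro ω hω
      simp only [Set.mem_setOf_eq, zero_mul, Finset.sum_const_zero, zero_div, Int.floor_zero,
        sub_zero, ← Finset.mul_sum, mul_div_right_comm, hcR] at hω
      set S : ℝ := ∑ i, v i ω with hS
      have hSeq : S = a * (a⁻¹ * S) := by field_simp
      rcases lt_abs.mp hω with h | h
      · left
        have h2 : (2:ℤ) ≤ ⌊a⁻¹ * S⌋ := h
        have : ((2:ℤ):ℝ) ≤ a⁻¹ * S := Int.le_floor.mp h2
        have hy : (1:ℝ) ≤ a⁻¹ * S := by push_cast at this; linarith
        show a ≤ S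
        rw [hSeq]
        nlinarith
      · right
        have h2 : ⌊a⁻¹ * S⌋ ≤ -2 := by omega
        have hlt : a⁻¹ * S < (⌊a⁻¹ * S⌋ : ℝ) + 1 := Int.lt_floor_add_one _
        have h2' : ((⌊a⁻¹ * S⌋ : ℤ) : ℝ) ≤ -2 := by exact_mod_cast h2
        have hy : a⁻¹ * S ≤ -1 := by linarith
        show S ≤ -a
        rw [hSeq]
        nlinarith
    have hmain := chernoff_abs hd hmeas hindep hmean hbdd ha.le (μ := μ)
    have hE : (μ {ω | 1 < |⌊(∑ i, c * v i ω) / R⌋ - ⌊(∑ i, (0:ℝ) * v i ω) / R⌋|}).toReal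
        ≤ (μ {ω | a ≤ ∑ i, v i ω}).toReal + (μ {ω | ∑ i, v i ω ≤ -a}).toReal := by
      rw [← ENNReal.toReal_add (measure_ne_top _ _) (measure_ne_top _ _)]
      exact ENNReal.toReal_mono
        (ENNReal.add_ne_top.mpr ⟨measure_ne_top _ _, measure_ne_top _ _⟩)
        ((measure_mono hsub).trans (measure_union_le _ _))
    have hexp : 2 * Real.exp (-(a ^ 2) / (2 * d)) = 2 * Real.exp (-((d:ℝ) ^ (2 * ε)) / 2) := by
      congr 2
      have ha2 : a ^ 2 = (d:ℝ) * (d:ℝ) ^ (2 * ε) := by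
        rw [hadef, ← Real.rpow_natCast ((d:ℝ) ^ ((1:ℝ)/2 + ε)) 2, ← Real.rpow_mul hd'.le]
        rw [show ((1:ℝ)/2 + ε) * (2:ℕ) = 1 + 2 * ε by push_cast; ring, Real.rpow_add hd',
          Real.rpow_one]
      rw [ha2]
      field_simp
    calc (μ _).toReal ≤ _ := hE
      _ ≤ 2 * Real.exp (-(a ^ 2) / (2 * d)) := hmain
      _ = _ := hexp
end
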